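/- Let W be a group generated by a normal subgroup I together with a single element Fr, and let ρ : W → GL(V) be a finite-dimensional irreducible complex representation that is trivial on a subgroup J ⊴ W with J ≤ I and I/J finite. Then there exist a positive integer d, a group homomorphism χ : W → ℂˣ that is trivial on I, and a representation τ of W that is trivial on the normal subgroup generated by Fr^d and J, such that ρ(w) = χ(w) · τ(w) for all w ∈ W. -/

import Mathlib

open Subgroup
open scoped commutatorElement


lemma aux_exists_pow_conj {W : Type*} [Group W] (I J : Subgroup W) [I.Normal] [J.Normal]
    (hJI : J ≤ I) (hfin : Finite (I ⧸ J.subgroupOf I)) (Fr : W) :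
    ∃ d : ℕ, 0 < d ∧ ∀ x ∈ I, Fr ^ d * x * (Fr ^ d)⁻¹ * x⁻¹ ∈ J := by
  classical
  set Q := I ⧸ J.subgroupOf I with hQ
  set S := QuotientGroup.leftRel (J.subgroupOf I) with hS
  have hmemI : ∀ (g : W) (x : I), g * (x : W) * g⁻¹ ∈ I := fun g x =>
    ‹I.Normal›.conj_mem _ x.2 g
  let c : I → I := fun x => ⟨Fr * x * Fr⁻¹, hmemI Fr x⟩
  have hcW : ∀ x y : I, (((c x)⁻¹ * c y : I) : W) = Fr * (((x⁻¹ * y : I) : W)) * Fr⁻¹ := by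
    intro x y; simp only [c]; push_cast; group
  have hc : ∀ x y : I, S.r x y → S.r (c x) (c y) := by
    intro x y h
    have h' : ((x⁻¹ * y : I) : W) ∈ J := mem_subgroupOf.mp (QuotientGroup.leftRel_apply.mp h)
    refine QuotientGroup.leftRel_apply.mpr (mem_subgroupOf.mpr ?_)
    rw [hcW]
    exact ‹J.Normal›.conj_mem _ h' Fr
  let e : Q → Q := Quotient.map' c hc
  have he : ∀ x : I, e (QuotientGroup.mk x) = QuotientGroup.mk (c x) := fun x => rfl
  have hinj : Function.Injective e := by
    intro a b
    induction a using Quotient.inductionOn' with | h x =>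
    induction b using Quotient.inductionOn' with | h y =>
    intro h
    have h2 : (((c x)⁻¹ * c y : I) : W) ∈ J :=
      mem_subgroupOf.mp (QuotientGroup.leftRel_apply.mp (Quotient.exact' h))
    rw [hcW] at h2
    refine Quotient.sound' (QuotientGroup.leftRel_apply.mpr (mem_subgroupOf.mpr ?_))
    have := ‹J.Normal›.conj_mem _ h2 Fr⁻¹
    simpa [mul_assoc] using this
  let E : Equiv.Perm Q := Equiv.ofBijective e (Finite.injective_iff_bijective.mp hinj)
  haveI : Fintype Q := Fintype.ofFinite Q
  refine ⟨orderOf E, orderOf_pos E, ?_⟩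
  intro x hx
  have hEd : E ^ orderOf E = 1 := pow_orderOf_eq_one E
  have hiter : ∀ (k : ℕ) (y : I), e^[k] (QuotientGroup.mk y)
      = QuotientGroup.mk (⟨Fr ^ k * y * (Fr ^ k)⁻¹, hmemI (Fr ^ k) y⟩ : I) := by
    intro k
    induction k with
    | zero => intro y; simp
    | succ n ih =>
        intro y
        rw [Function.iterate_succ_apply', ih y, he]
        congr 1
        apply Subtype.ext
        simp only [c, pow_succ]
        group
  have hco : (⇑(E ^ orderOf E) : Q → Q) = ⇑(1 : Equiv.Perm Q) := congrArg _ hEd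
  rw [Equiv.Perm.coe_pow] at hco
  have hfix : e^[orderOf E] (QuotientGroup.mk (⟨x, hx⟩ : I))
      = QuotientGroup.mk (⟨x, hx⟩ : I) := by
    exact congrFun hco (QuotientGroup.mk (⟨x, hx⟩ : I))
  rw [hiter] at hfix
  have h2 : (((⟨Fr ^ orderOf E * x * (Fr ^ orderOf E)⁻¹, by exact hmemI _ ⟨x, hx⟩⟩ : I)⁻¹ * ⟨x, hx⟩ : I) : W) ∈ J :=
    mem_subgroupOf.mp (QuotientGroup.leftRel_apply.mp (Quotient.exact' hfix))
  have h3 : ((Fr ^ orderOf E * x * (Fr ^ orderOf E)⁻¹ : W)⁻¹ * x) ∈ J := by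
    simpa using h2
  have h4 := ‹J.Normal›.conj_mem _ (J.inv_mem h3) x
  have heq : Fr ^ orderOf E * x * (Fr ^ orderOf E)⁻¹ * x⁻¹
      = x * ((Fr ^ orderOf E * x * (Fr ^ orderOf E)⁻¹)⁻¹ * x)⁻¹ * x⁻¹ := by group
  rw [heq]
  exact h4



/-- If `W = ⟨I, Fr⟩` with `I ⊴ W`, `J ⊴ W`, `J ≤ I`, `I/J` finite, and `ρ` is an
irreducible finite-dimensional complex representation of `W` trivial on `J`, then
`ρ = χ ⊗ τ` where `χ` is a character trivial on `I` (unramified) and `τ` is trivial on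
the normal subgroup generated by `Fr^d` and `J`, for some `d ≥ 1`. -/
theorem irreducible_rep_unramified_twist_of_finite {W : Type*} [Group W]
    (I J : Subgroup W) [I.Normal] [J.Normal] (hJI : J ≤ I)
    (hfin : Finite (I ⧸ J.subgroupOf I)) (Fr : W)
    (hgen : Subgroup.closure ((I : Set W) ∪ {Fr}) = ⊤)
    {V : Type*} [AddCommGroup V] [Module ℂ V] [FiniteDimensional ℂ V] [Nontrivial V]
    (ρ : W →* LinearMap.GeneralLinearGroup ℂ V)
    (hJtriv : ∀ x ∈ J, ρ x = 1)
    (hirr : ∀ p : Submodule ℂ V, (∀ w : W, ∀ v ∈ p, (ρ w : V →ₗ[ℂ] V) v ∈ p) → p = ⊥ ∨ p = ⊤) :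
    ∃ (d : ℕ), 0 < d ∧ ∃ (χ : W →* ℂˣ) (τ : W →* LinearMap.GeneralLinearGroup ℂ V),
      (∀ x ∈ I, χ x = 1) ∧
      (∀ x ∈ Subgroup.normalClosure ({Fr ^ d} ∪ (J : Set W)), τ x = 1) ∧
      (∀ w : W, (ρ w : V →ₗ[ℂ] V) = (χ w : ℂ) • (τ w : V →ₗ[ℂ] V)) := by
  classical
  haveI : (J.subgroupOf I).Normal := ‹J.Normal›.subgroupOf I
  by_cases hcase : ∃ n : ℕ, 0 < n ∧ Fr ^ n ∈ I
  · -- Case A : Fr has finite order mod I; then Fr has finite order mod J, take χ = 1, τ = ρ.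
    obtain ⟨n, hn, hFrI⟩ := hcase
    haveI : Fintype (I ⧸ J.subgroupOf I) := Fintype.ofFinite _
    set q : I ⧸ J.subgroupOf I := QuotientGroup.mk (⟨Fr ^ n, hFrI⟩ : I) with hq
    have hm : 0 < orderOf q := orderOf_pos q
    have hqm : (QuotientGroup.mk ((⟨Fr ^ n, hFrI⟩ : I) ^ orderOf q) : I ⧸ J.subgroupOf I) = 1 := by
      rw [← pow_orderOf_eq_one q, hq]
      exact map_pow (QuotientGroup.mk' (J.subgroupOf I)) _ _
    have hFrJ : Fr ^ (n * orderOf q) ∈ J := by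
      have h1 : ((⟨Fr ^ n, hFrI⟩ : I) ^ orderOf q) ∈ J.subgroupOf I :=
        (QuotientGroup.eq_one_iff _).mp hqm
      rw [mem_subgroupOf] at h1
      have h2 : (((⟨Fr ^ n, hFrI⟩ : I) ^ orderOf q : I) : W) = Fr ^ (n * orderOf q) := by
        rw [SubmonoidClass.coe_pow, ← pow_mul]
      rwa [h2] at h1
    refine ⟨n * orderOf q, by positivity, 1, ρ, fun x _ => rfl, ?_, ?_⟩
    · intro x hx
      have hle : normalClosure ({Fr ^ (n * orderOf q)} ∪ (J : Set W)) ≤ ρ.ker := by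
        apply normalClosure_le_normal
        rintro y (rfl | hy)
        · exact MonoidHom.mem_ker.mpr (hJtriv _ hFrJ)
        · exact MonoidHom.mem_ker.mpr (hJtriv _ hy)
      exact MonoidHom.mem_ker.mp (hle hx)
    · intro w; simp
  · -- Case B : Fr has infinite order mod I.
    push_neg at hcase
    obtain ⟨d, hd, hconj⟩ := aux_exists_pow_conj I J hJI hfin Fr
    -- ρ (Fr ^ d) commutes with everything in the image.
    have hcomm : ∀ w : W, Commute (ρ (Fr ^ d)) (ρ w) := by
      intro w
      have hw : w ∈ Subgroup.closure ((I : Set W) ∪ {Fr}) := hgen ▸ mem_top w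
      induction hw using Subgroup.closure_induction with
      | mem x hx =>
          rcases hx with hx | hx
          · have h1 : ρ ⁅Fr ^ d, x⁆ = 1 := hJtriv _ (hconj x hx)
            rw [map_commutatorElement] at h1
            exact commutatorElement_eq_one_iff_commute.mp h1
          · rcases hx with rfl
            rw [map_pow]
            exact (Commute.refl (ρ x)).pow_left d
      | one => rw [map_one]; exact Commute.one_right _
      | mul x y hx hy ihx ihy => rw [map_mul]; exact ihx.mul_right ihy
      | inv x hx ihx => rw [map_inv]; exact ihx.inv_right
    -- Schur: ρ (Fr ^ d) is a scalar μ.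
    set fL : Module.End ℂ V := (ρ (Fr ^ d) : V →ₗ[ℂ] V) with hfL
    obtain ⟨μ, hμ⟩ := Module.End.exists_eigenvalue fL
    have hpinv : ∀ w : W, ∀ v ∈ fL.eigenspace μ, (ρ w : V →ₗ[ℂ] V) v ∈ fL.eigenspace μ := by
      intro w v hv
      rw [Module.End.mem_eigenspace_iff] at hv ⊢
      have hc : fL * (ρ w : V →ₗ[ℂ] V) = (ρ w : V →ₗ[ℂ] V) * fL := by
        have h := congrArg (Units.val) (hcomm w).eq
        rw [Units.val_mul, Units.val_mul] at h
        exact h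
      calc fL ((ρ w : V →ₗ[ℂ] V) v) = ((ρ w : V →ₗ[ℂ] V) * fL) v := by
            rw [← hc]; rfl
        _ = (ρ w : V →ₗ[ℂ] V) (fL v) := rfl
        _ = μ • (ρ w : V →ₗ[ℂ] V) v := by rw [hv, map_smul]
    have htop : fL.eigenspace μ = ⊤ := by
      rcases hirr _ hpinv with hbot | htop
      · exact absurd hbot hμ
      · exact htop
    have hscal : ∀ v : V, fL v = μ • v := by
      intro v
      exact Module.End.mem_eigenspace_iff.mp (htop ▸ Submodule.mem_top)
    have hμ0 : μ ≠ 0 := by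
      intro h0
      obtain ⟨v, hv⟩ := exists_ne (0 : V)
      apply hv
      have h1 : fL v = 0 := by rw [hscal v, h0, zero_smul]
      have h2 : ((ρ (Fr ^ d))⁻¹ : LinearMap.GeneralLinearGroup ℂ V) * (ρ (Fr ^ d)) = 1 :=
        inv_mul_cancel _
      have h3 : (((ρ (Fr ^ d))⁻¹ : LinearMap.GeneralLinearGroup ℂ V) : V →ₗ[ℂ] V) (fL v)
          = v := by
        have h4 := congrArg (fun u : LinearMap.GeneralLinearGroup ℂ V => (u : V →ₗ[ℂ] V) v) h2
        exact h4
      rw [h1, map_zero] at h3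
      exact h3.symm
    -- a d-th root of μ
    obtain ⟨z, hz⟩ := IsAlgClosed.exists_pow_nat_eq μ hd
    have hz0 : z ≠ 0 := fun h0 => hμ0 (by rw [← hz, h0, zero_pow hd.ne'])
    set zu : ℂˣ := Units.mk0 z hz0 with hzu
    -- the quotient W / I is infinite cyclic generated by Fr
    set q : W ⧸ I := QuotientGroup.mk Fr with hqdef
    have hqz : ∀ m : ℤ, q ^ m = 1 → m = 0 := by
      intro m hm1
      have h1 : ((Fr ^ m : W) : W ⧸ I) = 1 := by
        rw [← hm1, hqdef]
        exact map_zpow (QuotientGroup.mk' I) Fr m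
      have h2 : Fr ^ m ∈ I := (QuotientGroup.eq_one_iff _).mp h1
      rcases lt_trichotomy m 0 with h | h | h
      · exfalso
        have h5 : Fr ^ (((-m).toNat : ℤ)) ∈ I := by
          rw [Int.toNat_of_nonneg (by omega), zpow_neg]
          exact I.inv_mem h2
        rw [zpow_natCast] at h5
        exact hcase (-m).toNat (by omega) h5
      · exact h
      · exfalso
        have h5 : Fr ^ ((m.toNat : ℤ)) ∈ I := by
          rwa [Int.toNat_of_nonneg (by omega)]
        rw [zpow_natCast] at h5
        exact hcase m.toNat (by omega) h5
    have hqtop : Subgroup.zpowers q = ⊤ := by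
      have h1 : Subgroup.map (QuotientGroup.mk' I) ⊤ = ⊤ :=
        Subgroup.map_top_of_surjective _ (QuotientGroup.mk'_surjective I)
      rw [← hgen, MonoidHom.map_closure] at h1
      rw [eq_top_iff, ← h1]
      apply (Subgroup.closure_le _).mpr
      rintro y ⟨x, hx | hx, rfl⟩
      · have hmk : QuotientGroup.mk' I x = 1 := (QuotientGroup.eq_one_iff _).mpr hx
        simp only [hmk, SetLike.mem_coe]
        exact Subgroup.one_mem _
      · rcases hx with rfl
        exact Subgroup.mem_zpowers _
    set k : Multiplicative ℤ →* (W ⧸ I) := (zpowersHom (W ⧸ I)) q with hk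
    have hkinj : Function.Injective k := by
      intro a b hab
      have h1 : q ^ (Multiplicative.toAdd a - Multiplicative.toAdd b) = 1 := by
        rw [zpow_sub]
        rw [zpowersHom_apply, zpowersHom_apply] at hab
        rw [hab, mul_inv_cancel]
      have := hqz _ h1
      have : Multiplicative.toAdd a = Multiplicative.toAdd b := by omega
      exact Multiplicative.toAdd.injective this
    have hksurj : Function.Surjective k := by
      intro y
      have : y ∈ Subgroup.zpowers q := hqtop ▸ Subgroup.mem_top y
      obtain ⟨m, hm⟩ := Subgroup.mem_zpowers_iff.mp this
      exact ⟨Multiplicative.ofAdd m, by rw [zpowersHom_apply]; exact hm⟩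
    set iso : Multiplicative ℤ ≃* (W ⧸ I) := MulEquiv.ofBijective k ⟨hkinj, hksurj⟩ with hiso
    set χ0 : (W ⧸ I) →* ℂˣ := ((zpowersHom ℂˣ) zu).comp iso.symm.toMonoidHom with hχ0
    set χ : W →* ℂˣ := χ0.comp (QuotientGroup.mk' I) with hχ
    have hχI : ∀ x ∈ I, χ x = 1 := by
      intro x hx
      have h1 : QuotientGroup.mk' I x = 1 := (QuotientGroup.eq_one_iff _).mpr hx
      rw [hχ, MonoidHom.comp_apply, h1, map_one]
    have hχFr : χ Fr = zu := by
      have h1 : iso (Multiplicative.ofAdd 1) = q := by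
        rw [hiso]
        show k (Multiplicative.ofAdd 1) = q
        rw [zpowersHom_apply]
        simp
      have h2 : iso.symm q = Multiplicative.ofAdd 1 := by
        rw [← h1, MulEquiv.symm_apply_apply]
      rw [hχ, MonoidHom.comp_apply]
      show χ0 q = zu
      rw [hχ0, MonoidHom.comp_apply]
      show ((zpowersHom ℂˣ) zu) (iso.symm q) = zu
      rw [h2, zpowersHom_apply]
      simp
    have hχFrd : ((χ (Fr ^ d) : ℂˣ) : ℂ) = μ := by
      rw [map_pow, hχFr]
      rw [← hz, hzu]
      simp
    -- the scalar embedding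
    set A := algebraMap ℂ (Module.End ℂ V) with hA
    set s : ℂˣ →* (LinearMap.GeneralLinearGroup ℂ V) := Units.map A.toMonoidHom with hs
    have hsval : ∀ u : ℂˣ, ((s u : LinearMap.GeneralLinearGroup ℂ V) : V →ₗ[ℂ] V) = A (u : ℂ) :=
      fun u => rfl
    have hcen : ∀ (u : ℂˣ) (g : LinearMap.GeneralLinearGroup ℂ V), Commute (s u) g := by
      intro u g
      have h1 : ((s u * g : LinearMap.GeneralLinearGroup ℂ V) : V →ₗ[ℂ] V)
          = ((g * s u : LinearMap.GeneralLinearGroup ℂ V) : V →ₗ[ℂ] V) := by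
        rw [Units.val_mul, Units.val_mul, hsval]
        exact Algebra.commutes _ _
      exact Units.ext h1
    have hceninv : ∀ (u : ℂˣ) (g : LinearMap.GeneralLinearGroup ℂ V), Commute ((s u)⁻¹) g :=
      fun u g => (hcen u g).inv_left
    -- the twist τ
    set τ : W →* LinearMap.GeneralLinearGroup ℂ V :=
      { toFun := fun w => (s (χ w))⁻¹ * ρ w
        map_one' := by simp
        map_mul' := by
          intro a b
          simp only [map_mul, mul_inv_rev]
          have h1 := (hceninv (χ b) ((s (χ a))⁻¹)).eq
          have h2 := (hceninv (χ b) (ρ a)).eq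
          calc (s (χ b))⁻¹ * (s (χ a))⁻¹ * (ρ a * ρ b)
              = (s (χ a))⁻¹ * ((s (χ b))⁻¹ * ρ a) * ρ b := by
                rw [← mul_assoc, h1]; simp [mul_assoc]
            _ = (s (χ a))⁻¹ * (ρ a * (s (χ b))⁻¹) * ρ b := by rw [h2]
            _ = (s (χ a))⁻¹ * ρ a * ((s (χ b))⁻¹ * ρ b) := by simp [mul_assoc] } with hτ
    have hτapp : ∀ w : W, τ w = (s (χ w))⁻¹ * ρ w := fun w => rfl
    -- ρ (Fr ^ d) = s (χ (Fr ^ d))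
    have hρFrd : ρ (Fr ^ d) = s (χ (Fr ^ d)) := by
      apply Units.ext
      rw [hsval, hχFrd]
      apply LinearMap.ext
      intro v
      rw [Module.algebraMap_end_apply]
      exact hscal v
    refine ⟨d, hd, χ, τ, hχI, ?_, ?_⟩
    · intro x hx
      have hle : normalClosure ({Fr ^ d} ∪ (J : Set W)) ≤ τ.ker := by
        apply normalClosure_le_normal
        rintro y (rfl | hy)
        · refine SetLike.mem_coe.mpr (MonoidHom.mem_ker.mpr ?_)
          rw [hτapp, hρFrd, inv_mul_cancel]
        · refine SetLike.mem_coe.mpr (MonoidHom.mem_ker.mpr ?_)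
          rw [hτapp, hχI _ (hJI hy), hJtriv _ hy]
          simp
      exact MonoidHom.mem_ker.mp (hle hx)
    · intro w
      have h1 : (τ w : V →ₗ[ℂ] V) = ((χ w : ℂ))⁻¹ • (ρ w : V →ₗ[ℂ] V) := by
        rw [hτapp, ← map_inv s, Units.val_mul, hsval, Units.val_inv_eq_inv_val,
          ← Algebra.smul_def]
      rw [h1, smul_smul, mul_inv_cancel₀ (Units.ne_zero (χ w)), one_smul]
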